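/- The minor poset of the Boolean algebra B_n with its minimal generating set (the atoms) is isomorphic to the face lattice of the n-dimensional cube, equivalently to the poset of nonempty intervals of B_n ordered by inclusion with an additional minimal element adjoined. -/
import Mathlib


open Finset

/-- A generator-enriched lattice datum inside an ambient lattice `L`:
a minimal element `z` together with a finite generating set of elements
strictly above `z`. The underlying set of elements consists of all joins
of `z` with subsets of the generating set. -/
structure GEL (L : Type*) [Lattice L] [DecidableEq L] where
  z : L
  gens : Finset L
  lt_gens : ∀ g ∈ gens, z < g

namespace GEL

variable {L K : Type*} [Lattice L] [OrderBot L] [DecidableEq L]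

/-- The underlying set of elements of a generator enriched lattice. -/
def carrier (M : GEL L) : Finset L :=
  M.gens.powerset.image fun X => X.sup id ⊔ M.z

/-- Deletion of a set of generators. -/
def delete (M : GEL L) (I : Finset L) : GEL L :=
  ⟨M.z, M.gens \ I, fun g hg => M.lt_gens g (Finset.mem_sdiff.mp hg).1⟩

/-- Restriction to a set of generators. -/
def restrict (M : GEL L) (I : Finset L) : GEL L :=
  M.delete (M.gens \ I)

/-- Contraction by a set of generators. -/
def contract (M : GEL L) (I : Finset L) : GEL L :=
  ⟨I.sup id ⊔ M.z,
   (M.gens.image fun g => g ⊔ (I.sup id ⊔ M.z)).erase (I.sup id ⊔ M.z),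
   fun g hg => by
     obtain ⟨hne, hg'⟩ := Finset.mem_erase.mp hg
     obtain ⟨h, -, rfl⟩ := Finset.mem_image.mp hg'
     exact lt_of_le_of_ne le_sup_right (Ne.symm hne)⟩

open Classical in
/-- Contraction by an element: contract by all generators below it. -/
noncomputable def contractEl (M : GEL L) (ℓ : L) : GEL L :=
  M.contract (M.gens.filter fun g => g ≤ ℓ)

/-- A single deletion or contraction step. -/
def Step (M N : GEL L) : Prop :=
  ∃ I ⊆ M.gens, N = M.delete I ∨ N = M.contract I

/-- `Minor M N` : `N` is a minor of `M`, i.e. obtained from `M` by a finite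
sequence of deletions and contractions. -/
def Minor (M N : GEL L) : Prop :=
  Relation.ReflTransGen Step M N

/-- The generator enriched lattice on a lattice with `⊥`, with the given generating set. -/
def ofGens (G : Finset L) (hG : ∀ g ∈ G, (⊥ : L) < g) : GEL L :=
  ⟨⊥, G, hG⟩

/-- The underlying type of the minor poset of `T`: all minors of `T`
together with an adjoined minimum `none`. -/
abbrev MP (T : GEL L) := Option {M : GEL L // T.Minor M}

/-- The order relation of the minor poset. -/
def mple (T : GEL L) : MP T → MP T → Prop
  | none, _ => True
  | some _, none => False
  | some A, some B => B.1.Minor A.1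

/-- The rank function of the minor poset. -/
def mrank (T : GEL L) : MP T → ℕ
  | none => 0
  | some A => A.1.gens.card + 1

/-- A parallel: an element `ℓ` and distinct generators `g, h` with
`g ⊔ ℓ = h ⊔ ℓ ≠ ℓ`. -/
def HasParallel (M : GEL L) : Prop :=
  ∃ ℓ ∈ M.carrier, ∃ g ∈ M.gens, ∃ h ∈ M.gens,
    g ≠ h ∧ g ⊔ ℓ = h ⊔ ℓ ∧ g ⊔ ℓ ≠ ℓ

/-- Isomorphism of generator enriched lattices: a join-preserving bijection of the
underlying sets carrying the generating set onto the generating set. -/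
def GIso [Lattice K] [OrderBot K] [DecidableEq K] (M : GEL L) (N : GEL K) : Prop :=
  ∃ f : L → K, Set.BijOn f ↑M.carrier ↑N.carrier ∧
    (∀ a ∈ M.carrier, ∀ b ∈ M.carrier, f (a ⊔ b) = f a ⊔ f b) ∧
    f '' ↑M.gens = ↑N.gens

open Classical in
/-- The image generator enriched lattice `⟨f(I) | f(z)⟩` of a strong map. -/
noncomputable def map [Lattice K] [DecidableEq K] (f : L → K) (M : GEL L) : GEL K :=
  ⟨f M.z, (M.gens.image f).filter fun y => f M.z < y,
   fun g hg => (Finset.mem_filter.mp hg).2⟩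

/-- `T` lifts join irreducibles: for every `ℓ` and generator `g` with `g ≰ ℓ`,
the element `g ⊔ ℓ` is join irreducible in the interval `[ℓ, ⊤]`. -/
def LiftsJI (T : GEL L) : Prop :=
  ∀ ℓ : L, ∀ g ∈ T.gens, ¬ g ≤ ℓ →
    ∀ a b : L, ℓ ≤ a → ℓ ≤ b → g ⊔ ℓ = a ⊔ b → g ⊔ ℓ = a ∨ g ⊔ ℓ = b

end GEL

/-- The Boolean algebra `B_n` with its minimal generating set (the atoms). -/
def boolGEL (n : ℕ) : GEL (Finset (Fin n)) :=
  GEL.ofGens ((Finset.univ : Finset (Fin n)).image fun i => ({i} : Finset (Fin n)))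
    (by
      intro g hg
      simp only [Finset.mem_image] at hg
      obtain ⟨i, -, rfl⟩ := hg
      exact bot_lt_iff_ne_bot.mpr (by simp [Finset.bot_eq_empty]))

/-- The face poset of the `n`-cube: nonempty intervals `[A,B]` of `B_n` ordered
by inclusion, with an adjoined minimum. -/
abbrev CubeFace (n : ℕ) := Option {p : Finset (Fin n) × Finset (Fin n) // p.1 ⊆ p.2}

/-- The order relation on the face poset of the `n`-cube. -/
def cubeLE {n : ℕ} : CubeFace n → CubeFace n → Prop
  | none, _ => True
  | some _, none => False
  | some p, some q => q.1.1 ⊆ p.1.1 ∧ p.1.2 ⊆ q.1.2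

namespace MinorProof

variable {n : ℕ}

theorem gelExt {L : Type*} [Lattice L] [DecidableEq L] {M N : GEL L}
    (hz : M.z = N.z) (hg : M.gens = N.gens) : M = N := by
  cases M; cases N; simp_all

/-- The interval GEL `[A,B]`. -/
def ivl (A B : Finset (Fin n)) : GEL (Finset (Fin n)) :=
  ⟨A, (B \ A).image (fun i => insert i A), by
    intro g hg
    obtain ⟨i, hi, rfl⟩ := Finset.mem_image.mp hg
    exact Finset.ssubset_insert (Finset.mem_sdiff.mp hi).2⟩

theorem z_ivl (A B : Finset (Fin n)) : (ivl A B).z = A := rfl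

theorem gens_ivl (A B : Finset (Fin n)) :
    (ivl A B).gens = (B \ A).image (fun i => insert i A) := rfl

theorem insert_inj {A : Finset (Fin n)} {i j : Fin n} (hi : i ∉ A) (hj : j ∉ A)
    (h : insert i A = insert j A) : i = j := by
  have : i ∈ insert j A := h ▸ Finset.mem_insert_self i A
  rcases Finset.mem_insert.mp this with h' | h'
  · exact h'
  · exact absurd h' hi

theorem sup_ins (A T : Finset (Fin n)) :
    (T.image fun i => insert i A).sup id ⊔ A = A ∪ T := by
  ext x
  simp only [Finset.sup_eq_union, Finset.mem_union, Finset.mem_sup, Finset.mem_image,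
    id_eq, Finset.mem_insert]
  constructor
  · rintro (⟨y, ⟨i, hi, rfl⟩, hx⟩ | hx)
    · rcases Finset.mem_insert.mp hx with rfl | hx
      · exact Or.inr hi
      · exact Or.inl hx
    · exact Or.inl hx
  · rintro (hx | hx)
    · exact Or.inr hx
    · exact Or.inl ⟨insert x A, ⟨x, hx, rfl⟩, Finset.mem_insert_self x A⟩

theorem I_eq (A B : Finset (Fin n)) (I : Finset (Finset (Fin n)))
    (hI : I ⊆ (ivl A B).gens) :
    I = ((B \ A).filter fun i => insert i A ∈ I).image fun i => insert i A := by
  ext x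
  simp only [Finset.mem_image, Finset.mem_filter]
  constructor
  · intro hx
    obtain ⟨i, hi, rfl⟩ := Finset.mem_image.mp (hI hx)
    exact ⟨i, ⟨hi, hx⟩, rfl⟩
  · rintro ⟨i, ⟨hi, hxI⟩, rfl⟩; exact hxI

theorem contract_ivl (A B T : Finset (Fin n)) (hT : T ⊆ B \ A) :
    (ivl A B).contract (T.image fun i => insert i A) = ivl (A ∪ T) B := by
  have hz : (T.image fun i => insert i A).sup id ⊔ (ivl A B).z = A ∪ T := sup_ins A T
  refine gelExt hz ?_
  show ((ivl A B).gens.image fun g => g ⊔ _).erase _ =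
    (B \ (A ∪ T)).image (fun i => insert i (A ∪ T))
  rw [hz]
  ext x
  simp only [Finset.mem_erase, Finset.mem_image, gens_ivl, Finset.mem_image, Finset.mem_sdiff,
    Finset.mem_union, Finset.sup_eq_union]
  constructor
  · rintro ⟨hne, g, ⟨i, ⟨hiB, hiA⟩, rfl⟩, rfl⟩
    have hins : insert i A ∪ (A ∪ T) = insert i (A ∪ T) := by
      ext y; simp only [Finset.mem_union, Finset.mem_insert]; tauto
    rw [hins] at hne ⊢
    have hiT : i ∉ T := by
      intro hiT
      apply hne
      rw [Finset.insert_eq_self.mpr (Finset.mem_union.mpr (Or.inr hiT))]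
    exact ⟨i, ⟨hiB, fun h => h.elim hiA hiT⟩, rfl⟩
  · rintro ⟨i, ⟨hiB, hi⟩, rfl⟩
    push_neg at hi
    refine ⟨?_, insert i A, ⟨i, ⟨hiB, hi.1⟩, rfl⟩, ?_⟩
    · rw [Finset.insert_ne_self]; simp [hi.1, hi.2]
    · ext y; simp only [Finset.mem_union, Finset.mem_insert]; tauto

theorem delete_ivl (A B T : Finset (Fin n)) (hT : T ⊆ B \ A) :
    (ivl A B).delete (T.image fun i => insert i A) = ivl A (B \ T) := by
  refine gelExt rfl ?_
  show (ivl A B).gens \ _ = ((B \ T) \ A).image (fun i => insert i A)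
  ext x
  simp only [gens_ivl, Finset.mem_sdiff, Finset.mem_image]
  constructor
  · rintro ⟨⟨i, ⟨hiB, hiA⟩, rfl⟩, hx⟩
    refine ⟨i, ⟨⟨hiB, ?_⟩, hiA⟩, rfl⟩
    intro hiT
    exact hx ⟨i, hiT, rfl⟩
  · rintro ⟨i, ⟨⟨hiB, hiT⟩, hiA⟩, rfl⟩
    refine ⟨⟨i, ⟨hiB, hiA⟩, rfl⟩, ?_⟩
    rintro ⟨j, hjT, hj⟩
    have hjBA := hT hjT
    have := insert_inj (Finset.mem_sdiff.mp hjBA).2 hiA hj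
    exact hiT (this ▸ hjT)

theorem step_ivl {A B : Finset (Fin n)} (hAB : A ⊆ B) {N : GEL (Finset (Fin n))}
    (h : GEL.Step (ivl A B) N) :
    ∃ A' B', A ⊆ A' ∧ A' ⊆ B' ∧ B' ⊆ B ∧ N = ivl A' B' := by
  obtain ⟨I, hI, h | h⟩ := h
  · set T := (B \ A).filter (fun i => insert i A ∈ I) with hTdef
    have hTsub : T ⊆ B \ A := Finset.filter_subset _ _
    rw [I_eq A B I hI, ← hTdef, delete_ivl A B T hTsub] at h
    refine ⟨A, B \ T, subset_rfl, ?_, Finset.sdiff_subset, h⟩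
    rw [Finset.subset_sdiff]
    exact ⟨hAB, Finset.disjoint_left.mpr fun a ha haT => (Finset.mem_sdiff.mp (hTsub haT)).2 ha⟩
  · set T := (B \ A).filter (fun i => insert i A ∈ I) with hTdef
    have hTsub : T ⊆ B \ A := Finset.filter_subset _ _
    rw [I_eq A B I hI, ← hTdef, contract_ivl A B T hTsub] at h
    exact ⟨A ∪ T, B, Finset.subset_union_left,
      Finset.union_subset hAB (hTsub.trans Finset.sdiff_subset), subset_rfl, h⟩

theorem minor_ivl {A B : Finset (Fin n)} (hAB : A ⊆ B) {N : GEL (Finset (Fin n))}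
    (h : GEL.Minor (ivl A B) N) :
    ∃ A' B', A ⊆ A' ∧ A' ⊆ B' ∧ B' ⊆ B ∧ N = ivl A' B' := by
  induction h with
  | refl => exact ⟨A, B, subset_rfl, hAB, subset_rfl, rfl⟩
  | tail _ hstep ih =>
    obtain ⟨A', B', h1, h2, h3, rfl⟩ := ih
    obtain ⟨A'', B'', g1, g2, g3, rfl⟩ := step_ivl h2 hstep
    exact ⟨A'', B'', h1.trans g1, g2, g3.trans h3, rfl⟩

theorem ivl_minor {A B A' B' : Finset (Fin n)} (hAB : A ⊆ B) (h1 : A ⊆ A')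
    (h2 : A' ⊆ B') (h3 : B' ⊆ B) : GEL.Minor (ivl A B) (ivl A' B') := by
  have hsub : A' \ A ⊆ B \ A := Finset.sdiff_subset_sdiff (h2.trans h3) subset_rfl
  have s1 : GEL.Step (ivl A B) (ivl A' B) := by
    refine ⟨(A' \ A).image (fun i => insert i A), ?_, Or.inr ?_⟩
    · rw [gens_ivl]; exact Finset.image_subset_image hsub
    · rw [contract_ivl A B _ hsub, Finset.union_sdiff_of_subset h1]
  have hsub2 : B \ B' ⊆ B \ A' := Finset.sdiff_subset_sdiff subset_rfl h2
  have s2 : GEL.Step (ivl A' B) (ivl A' B') := by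
    refine ⟨(B \ B').image (fun i => insert i A'), ?_, Or.inl ?_⟩
    · rw [gens_ivl]; exact Finset.image_subset_image hsub2
    · have hbb : B \ (B \ B') = B' := by
        rw [sdiff_sdiff_right_self]; exact inf_eq_right.mpr h3
      rw [delete_ivl A' B _ hsub2, hbb]
  exact (Relation.ReflTransGen.single s1).tail s2

def topOf (M : GEL (Finset (Fin n))) : Finset (Fin n) := M.gens.sup id ⊔ M.z

theorem top_ivl {A B : Finset (Fin n)} (hAB : A ⊆ B) : topOf (ivl A B) = B := by
  show ((B \ A).image fun i => insert i A).sup id ⊔ A = B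
  rw [sup_ins, Finset.union_sdiff_of_subset hAB]

theorem boolGEL_eq : boolGEL n = ivl ∅ Finset.univ := by
  refine gelExt rfl ?_
  show Finset.univ.image (fun i => ({i} : Finset (Fin n))) =
    (Finset.univ \ ∅).image (fun i => insert i ∅)
  simp

end MinorProof

open MinorProof in
/-- The characterization of minors of `boolGEL n`. -/
theorem minor_char {n : ℕ} {M : GEL (Finset (Fin n))} (h : (boolGEL n).Minor M) :
    ∃ A B : Finset (Fin n), A ⊆ B ∧ M = ivl A B := by
  rw [boolGEL_eq] at h
  obtain ⟨A, B, -, h2, -, rfl⟩ := minor_ivl (Finset.empty_subset _) h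
  exact ⟨A, B, h2, rfl⟩

/-- The minor poset of the Boolean algebra `B_n` with its minimal generating set
is isomorphic to the face lattice of the `n`-dimensional cube, i.e. the poset of
nonempty intervals of `B_n` under inclusion with a minimum adjoined. -/
theorem minorPoset_boolean_iso_cube (n : ℕ) :
    ∃ e : GEL.MP (boolGEL n) ≃ CubeFace n,
      ∀ a b : GEL.MP (boolGEL n), GEL.mple (boolGEL n) a b ↔ cubeLE (e a) (e b) := by
  classical
  have char : ∀ M : {M : GEL (Finset (Fin n)) // (boolGEL n).Minor M},
      ∃ A B : Finset (Fin n), A ⊆ B ∧ M.1 = MinorProof.ivl A B := fun M => minor_char M.2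
  let f : GEL.MP (boolGEL n) → CubeFace n := fun x =>
    x.map fun M => ⟨(M.1.z, MinorProof.topOf M.1), by
      obtain ⟨A, B, hAB, hM⟩ := char M
      rw [hM, MinorProof.z_ivl, MinorProof.top_ivl hAB]; exact hAB⟩
  let g : CubeFace n → GEL.MP (boolGEL n) := fun x =>
    x.map fun p => ⟨MinorProof.ivl p.1.1 p.1.2, by
      rw [MinorProof.boolGEL_eq]
      exact MinorProof.ivl_minor (Finset.empty_subset _) (Finset.empty_subset _) p.2
        (Finset.subset_univ _)⟩
  have gf : ∀ x, g (f x) = x := by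
    rintro (_ | M)
    · rfl
    · obtain ⟨A, B, hAB, hM⟩ := char M
      simp only [f, g, Option.map_some]
      congr 1
      apply Subtype.ext
      show MinorProof.ivl M.1.z (MinorProof.topOf M.1) = M.1
      rw [hM, MinorProof.z_ivl, MinorProof.top_ivl hAB]
  have fg : ∀ x, f (g x) = x := by
    rintro (_ | p)
    · rfl
    · simp only [f, g, Option.map_some]
      congr 1
      apply Subtype.ext
      show ((MinorProof.ivl p.1.1 p.1.2).z, MinorProof.topOf (MinorProof.ivl p.1.1 p.1.2))
        = p.1
      rw [MinorProof.z_ivl, MinorProof.top_ivl p.2]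
  refine ⟨⟨f, g, gf, fg⟩, ?_⟩
  rintro (_ | a) (_ | b)
  · exact ⟨fun _ => trivial, fun _ => trivial⟩
  · exact ⟨fun _ => trivial, fun _ => trivial⟩
  · exact ⟨fun h => h.elim, fun h => h.elim⟩
  · obtain ⟨A1, B1, h1, hEq1⟩ := char a
    obtain ⟨A2, B2, h2, hEq2⟩ := char b
    show b.1.Minor a.1 ↔ cubeLE (f (some a)) (f (some b))
    have hfa : f (some a) = some ⟨(A1, B1), h1⟩ := by
      simp only [f, Option.map_some]
      congr 1
      apply Subtype.ext
      show (a.1.z, MinorProof.topOf a.1) = (A1, B1)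
      rw [hEq1, MinorProof.z_ivl, MinorProof.top_ivl h1]
    have hfb : f (some b) = some ⟨(A2, B2), h2⟩ := by
      simp only [f, Option.map_some]
      congr 1
      apply Subtype.ext
      show (b.1.z, MinorProof.topOf b.1) = (A2, B2)
      rw [hEq2, MinorProof.z_ivl, MinorProof.top_ivl h2]
    rw [hfa, hfb, hEq1, hEq2]
    show GEL.Minor (MinorProof.ivl A2 B2) (MinorProof.ivl A1 B1) ↔ A2 ⊆ A1 ∧ B1 ⊆ B2
    constructor
    · intro h
      obtain ⟨A', B', g1, g2, g3, hEq⟩ := MinorProof.minor_ivl h2 h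
      have hz : A1 = A' := by
        have := congrArg GEL.z hEq
        rwa [MinorProof.z_ivl, MinorProof.z_ivl] at this
      have ht : B1 = B' := by
        have := congrArg MinorProof.topOf hEq
        rwa [MinorProof.top_ivl h1, MinorProof.top_ivl g2] at this
      exact ⟨hz ▸ g1, ht ▸ g3⟩
    · rintro ⟨ha, hb⟩
      exact MinorProof.ivl_minor h2 ha h1 hb
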